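/- The vertex set of the symplectic graph Sp(2ν,q) can be partitioned into q^ν + 1 pairwise disjoint subsets X_1, …, X_{q^ν+1} such that no edge of Sp(2ν,q) joins two vertices of the same subset, and moreover, for any two distinct indices i and j, every vertex in X_i is adjacent to exactly q^{ν-1} vertices in X_j. -/

import Mathlib

open Matrix

/-- The standard nonsingular alternate matrix over `F` with `ν` diagonal blocks
`[[0,1],[-1,0]]`. -/
def sK (F : Type) [Field F] (ν : ℕ) : Matrix (Fin (2 * ν)) (Fin (2 * ν)) F :=
  Matrix.of fun i j =>
    if i.val % 2 = 0 ∧ j.val = i.val + 1 then (1 : F)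
    else if j.val % 2 = 0 ∧ i.val = j.val + 1 then (-1 : F) else 0

/-- The symplectic graph `Sp(2ν, q)`: vertices are the one-dimensional subspaces
of `F^(2ν)`, with `[α]` adjacent to `[β]` iff `α K βᵀ ≠ 0`. -/
def SpG (F : Type) [Field F] (ν : ℕ) :
    SimpleGraph (Projectivization F (Fin (2 * ν) → F)) :=
  SimpleGraph.fromRel fun x y => x.rep ⬝ᵥ ((sK F ν) *ᵥ y.rep) ≠ 0

namespace SpGAux

/-! ### Existence of a field extension of any given degree over a finite field -/

open Polynomial in
lemma exists_ext (F : Type) [Field F] [Fintype F] (ν : ℕ) (hν : 1 ≤ ν) :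
    ∃ (E : Type) (_ : Field E) (_ : Algebra F E), Module.finrank F E = ν := by
  obtain ⟨p, hp⟩ := CharP.exists F
  haveI := hp
  obtain ⟨n, hprime, hcard⟩ := FiniteField.card F p
  haveI : Fact p.Prime := ⟨hprime⟩
  letI : Algebra (ZMod p) F := ZMod.algebra F p
  have hn0 : (n : ℕ) ≠ 0 := n.ne_zero
  have hm0 : (n : ℕ) * ν ≠ 0 := by positivity
  set E := GaloisField p ((n : ℕ) * ν) with hE
  -- `X ^ p ^ n - X` divides `X ^ p ^ (n ν) - X`
  have hdvd : (X : (ZMod p)[X]) ^ p ^ (n : ℕ) - X ∣ X ^ p ^ ((n : ℕ) * ν) - X := by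
    have h1 : p ^ (n : ℕ) - 1 ∣ p ^ ((n : ℕ) * ν) - 1 := by
      have := Nat.sub_dvd_pow_sub_pow (p ^ (n : ℕ)) 1 ν
      simpa [← pow_mul] using this
    obtain ⟨k, hk⟩ := h1
    have hple : 1 ≤ p ^ (n : ℕ) := Nat.one_le_pow _ _ hprime.pos
    have hple' : 1 ≤ p ^ ((n : ℕ) * ν) := Nat.one_le_pow _ _ hprime.pos
    have fact : ∀ a : ℕ, 1 ≤ a → (X : (ZMod p)[X]) ^ a - X = X * (X ^ (a - 1) - 1) := by
      intro a ha
      rw [mul_sub, mul_one, ← pow_succ', Nat.sub_add_cancel ha]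
    rw [fact _ hple, fact _ hple']
    apply mul_dvd_mul_left
    have h2 : ((X : (ZMod p)[X]) ^ (p ^ (n : ℕ) - 1)) - 1 ∣
        ((X : (ZMod p)[X]) ^ (p ^ (n : ℕ) - 1)) ^ k - 1 ^ k :=
      sub_dvd_pow_sub_pow _ _ k
    rw [one_pow, ← pow_mul, ← hk] at h2
    exact h2
  have hne : (X : (ZMod p)[X]) ^ p ^ ((n : ℕ) * ν) - X ≠ 0 :=
    FiniteField.X_pow_card_pow_sub_X_ne_zero _ hm0 hprime.one_lt
  have hbig : Splits ((X ^ p ^ ((n : ℕ) * ν) - X : (ZMod p)[X]).map (algebraMap (ZMod p) E)) :=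
    SplittingField.splits _
  have hsp : Splits ((X ^ p ^ (n : ℕ) - X : (ZMod p)[X]).map (algebraMap (ZMod p) E)) :=
    Splits.of_dvd hbig (Polynomial.map_ne_zero hne) (Polynomial.map_dvd _ hdvd)
  haveI : IsSplittingField (ZMod p) F (X ^ p ^ (n : ℕ) - X) :=
    FiniteField.isSplittingField_of_nat_card_eq p (n : ℕ)
      (by rw [Nat.card_eq_fintype_card, hcard])
  let g : F →ₐ[ZMod p] E := IsSplittingField.lift F (X ^ p ^ (n : ℕ) - X) hsp
  letI : Algebra F E := g.toRingHom.toAlgebra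
  refine ⟨E, inferInstance, inferInstance, ?_⟩
  haveI : Finite E := Module.finite_of_finite (ZMod p)
  haveI : Fintype E := Fintype.ofFinite E
  have hcE : Fintype.card E = p ^ ((n : ℕ) * ν) := by
    rw [← Nat.card_eq_fintype_card]
    exact GaloisField.card p _ hm0
  have h1 : Fintype.card E = Fintype.card F ^ Module.finrank F E := Module.card_eq_pow_finrank
  rw [hcE, hcard, ← pow_mul] at h1
  have := Nat.pow_right_injective hprime.two_le h1
  exact Nat.eq_of_mul_eq_mul_left (Nat.pos_of_ne_zero hn0) this.symm

/-! ### The symplectic form on `E × E` -/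

variable {F : Type} [Field F] {E : Type} [Field E] [Algebra F E]

/-- The form `Ω((x₁,x₂),(y₁,y₂)) = t (x₁ y₂ - x₂ y₁)`. -/
noncomputable def omg (t : E →ₗ[F] F) : (E × E) →ₗ[F] (E × E) →ₗ[F] F :=
  LinearMap.mk₂ F (fun p q => t (p.1 * q.2 - p.2 * q.1))
    (by intro p p' q; rw [← map_add]; congr 1; simp only [Prod.fst_add, Prod.snd_add]; ring)
    (by
      intro c p q; rw [← _root_.map_smul]; congr 1
      simp only [Prod.smul_fst, Prod.smul_snd, smul_sub, smul_mul_assoc])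
    (by intro p q q'; rw [← map_add]; congr 1; simp only [Prod.fst_add, Prod.snd_add]; ring)
    (by
      intro c p q; rw [← _root_.map_smul]; congr 1
      simp only [Prod.smul_fst, Prod.smul_snd, smul_sub, mul_smul_comm])

lemma omg_apply (t : E →ₗ[F] F) (p q : E × E) :
    omg t p q = t (p.1 * q.2 - p.2 * q.1) := rfl

lemma omg_skew (t : E →ₗ[F] F) (p q : E × E) : omg t p q = - omg t q p := by
  rw [omg_apply, omg_apply, ← map_neg]; congr 1; ring

/-! ### The parity equivalence and bases -/

def parEquiv (ν : ℕ) : Fin (2 * ν) ≃ (Fin ν ⊕ Fin ν) where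
  toFun k := if k.val % 2 = 0 then Sum.inl ⟨k.val / 2, by omega⟩ else Sum.inr ⟨k.val / 2, by omega⟩
  invFun s := Sum.elim (fun i => ⟨2 * i.val, by omega⟩) (fun i => ⟨2 * i.val + 1, by omega⟩) s
  left_inv k := by
    by_cases h : k.val % 2 = 0
    · simp only [if_pos h, Sum.elim_inl]
      exact Fin.ext (show 2 * (k.val / 2) = k.val by omega)
    · simp only [if_neg h, Sum.elim_inr]
      exact Fin.ext (show 2 * (k.val / 2) + 1 = k.val by omega)
  right_inv s := by
    rcases s with i | i
    · simp only [Sum.elim_inl]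
      simp only [show (2 * i.val) % 2 = 0 by omega, ↓reduceIte]
      exact congrArg Sum.inl (Fin.ext (show (2 * i.val) / 2 = i.val by omega))
    · simp only [Sum.elim_inr]
      simp only [show ¬ (2 * i.val + 1) % 2 = 0 by omega, ↓reduceIte]
      exact congrArg Sum.inr (Fin.ext (show (2 * i.val + 1) / 2 = i.val by omega))

variable {ν : ℕ}

noncomputable def bEF (e f : Module.Basis (Fin ν) F E) : Module.Basis (Fin (2 * ν)) F (E × E) :=
  (e.prod f).reindex (parEquiv ν).symm

lemma bEF_apply (e f : Module.Basis (Fin ν) F E) (k : Fin (2 * ν)) :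
    bEF e f k = if h : k.val % 2 = 0 then (e ⟨k.val / 2, by omega⟩, 0)
      else (0, f ⟨k.val / 2, by omega⟩) := by
  rw [bEF, Module.Basis.reindex_apply, Equiv.symm_symm]
  by_cases h : k.val % 2 = 0
  · rw [dif_pos h]
    have : parEquiv ν k = Sum.inl ⟨k.val / 2, by omega⟩ := by
      simp [parEquiv, h]
    rw [this, Module.Basis.prod_apply]
    simp
  · rw [dif_neg h]
    have : parEquiv ν k = Sum.inr ⟨k.val / 2, by omega⟩ := by
      simp [parEquiv, h]
    rw [this, Module.Basis.prod_apply]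
    simp

/-- The isometry from `F^(2ν)` to `E × E`. -/
noncomputable def psi (e f : Module.Basis (Fin ν) F E) : (Fin (2 * ν) → F) ≃ₗ[F] E × E :=
  (Pi.basisFun F (Fin (2 * ν))).equiv (bEF e f) (Equiv.refl _)

/-! ### The spread lines -/

/-- The line `{(a, m a)}` for `o = some m`, and `{(0, a)}` for `o = none`. -/
noncomputable def lineO (F : Type) [Field F] {E : Type} [Field E] [Algebra F E]
    (o : Option E) : E →ₗ[F] E × E :=
  o.elim (LinearMap.prod 0 LinearMap.id)
    (fun m => LinearMap.prod LinearMap.id ((LinearMap.mul F E) m))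

lemma lineO_some (m a : E) : lineO F (some m) a = (a, m * a) := rfl

lemma lineO_none (a : E) : lineO F (none : Option E) a = (0, a) := rfl

lemma lineO_inj (o : Option E) : Function.Injective (lineO F o) := by
  rcases o with _ | m <;> intro a b h
  · simpa [lineO_none, Prod.ext_iff] using h
  · rw [lineO_some, lineO_some, Prod.ext_iff] at h
    exact h.1

lemma lineO_cover (v : E × E) (hv : v ≠ 0) :
    ∃ o : Option E, v ∈ LinearMap.range (lineO F o) := by
  rcases eq_or_ne v.1 0 with h1 | h1
  · exact ⟨none, v.2, by rw [lineO_none]; exact (Prod.ext_iff.mpr ⟨h1.symm, rfl⟩)⟩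
  · refine ⟨some (v.2 * v.1⁻¹), v.1, ?_⟩
    rw [lineO_some]
    refine Prod.ext_iff.mpr ⟨rfl, ?_⟩
    field_simp

lemma lineO_disjoint {o o' : Option E} (h : o ≠ o') {v : E × E}
    (hv : v ∈ LinearMap.range (lineO F o)) (hv' : v ∈ LinearMap.range (lineO F o')) :
    v = 0 := by
  obtain ⟨a, rfl⟩ := hv
  obtain ⟨b, hb⟩ := hv'
  suffices ha : a = 0 by rw [ha, map_zero]
  rcases o with _ | m <;> rcases o' with _ | m'
  · exact absurd rfl h
  · rw [lineO_some, lineO_none, Prod.ext_iff] at hb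
    have hb1 : b = 0 := hb.1
    have hb2 : m' * b = a := hb.2
    rw [← hb2, hb1, mul_zero]
  · rw [lineO_none, lineO_some, Prod.ext_iff] at hb
    have hb1 : (0 : E) = a := hb.1
    exact hb1.symm
  · rw [lineO_some, lineO_some, Prod.ext_iff] at hb
    have hb1 : b = a := hb.1
    have hb2 : m' * b = m * a := hb.2
    by_contra ha
    have hm : m' = m := mul_right_cancel₀ ha (by rw [← hb2, hb1])
    exact h (by rw [hm])

lemma omg_line_line (t : E →ₗ[F] F) (o : Option E) (a b : E) :
    omg t (lineO F o a) (lineO F o b) = 0 := by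
  rcases o with _ | m
  · show t ((0 : E) * b - a * 0) = 0
    rw [show (0 : E) * b - a * 0 = 0 by ring, map_zero]
  · show t (a * (m * b) - m * a * b) = 0
    rw [show a * (m * b) - m * a * b = 0 by ring, map_zero]


lemma key2 (t : E →ₗ[F] F) (e f : Module.Basis (Fin ν) F E)
    (hef : ∀ i j, t (e i * f j) = if i = j then (1 : F) else 0) (k l : Fin (2 * ν)) :
    omg t (bEF e f k) (bEF e f l) = sK F ν k l := by
  have hkb : k.val < 2 * ν := k.is_lt
  have hlb : l.val < 2 * ν := l.is_lt
  have hsk : sK F ν k l = if k.val % 2 = 0 ∧ l.val = k.val + 1 then (1 : F)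
      else if l.val % 2 = 0 ∧ k.val = l.val + 1 then (-1 : F) else 0 := rfl
  rw [bEF_apply, bEF_apply, hsk]
  by_cases hk : k.val % 2 = 0 <;> by_cases hl : l.val % 2 = 0
  · rw [dif_pos hk, dif_pos hl, if_neg (by omega), if_neg (by omega)]
    show t (e ⟨k.val / 2, by omega⟩ * 0 - 0 * e ⟨l.val / 2, by omega⟩) = 0
    rw [mul_zero, zero_mul, sub_zero, map_zero]
  · rw [dif_pos hk, dif_neg hl]
    show t (e ⟨k.val / 2, by omega⟩ * f ⟨l.val / 2, by omega⟩ - 0 * 0) = _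
    rw [zero_mul, sub_zero, hef]
    by_cases hkl : l.val = k.val + 1
    · rw [if_pos (Fin.ext (show k.val / 2 = l.val / 2 by omega)), if_pos ⟨hk, hkl⟩]
    · rw [if_neg (fun hc => hkl (by
          have h2 : k.val / 2 = l.val / 2 := congrArg Fin.val hc
          omega)),
        if_neg (by omega), if_neg (by omega)]
  · rw [dif_neg hk, dif_pos hl]
    show t (0 * 0 - f ⟨k.val / 2, by omega⟩ * e ⟨l.val / 2, by omega⟩) = _
    rw [zero_mul, zero_sub,
      show f ⟨k.val / 2, by omega⟩ * e ⟨l.val / 2, by omega⟩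
        = e ⟨l.val / 2, by omega⟩ * f ⟨k.val / 2, by omega⟩ from mul_comm _ _,
      map_neg, hef]
    by_cases hkl : k.val = l.val + 1
    · rw [if_pos (Fin.ext (show l.val / 2 = k.val / 2 by omega)), if_neg (by omega),
        if_pos ⟨hl, hkl⟩]
    · rw [if_neg (fun hc => hkl (by
          have h2 : l.val / 2 = k.val / 2 := congrArg Fin.val hc
          omega)),
        if_neg (by omega), if_neg (by omega), neg_zero]
  · rw [dif_neg hk, dif_neg hl, if_neg (by omega), if_neg (by omega)]
    show t (0 * f ⟨l.val / 2, by omega⟩ - f ⟨k.val / 2, by omega⟩ * 0) = 0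
    rw [mul_zero, zero_mul, sub_zero, map_zero]

lemma key (t : E →ₗ[F] F) (e f : Module.Basis (Fin ν) F E)
    (hef : ∀ i j, t (e i * f j) = if i = j then (1 : F) else 0) (u v : Fin (2 * ν) → F) :
    u ⬝ᵥ (sK F ν) *ᵥ v = omg t (psi e f u) (psi e f v) := by
  have main : Matrix.toBilin' (sK F ν) =
      (omg t).compl₁₂ ((psi e f : (Fin (2 * ν) → F) →ₗ[F] E × E))
        ((psi e f : (Fin (2 * ν) → F) →ₗ[F] E × E)) := by
    apply LinearMap.ext_basis (Pi.basisFun F (Fin (2 * ν))) (Pi.basisFun F (Fin (2 * ν)))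
    intro k l
    rw [LinearMap.compl₁₂_apply]
    have hbk : ∀ m : Fin (2 * ν),
        ((psi e f : (Fin (2 * ν) → F) →ₗ[F] E × E)) ((Pi.basisFun F (Fin (2 * ν))) m)
          = bEF e f m := by
      intro m
      show (psi e f) ((Pi.basisFun F (Fin (2 * ν))) m) = bEF e f m
      rw [psi, Module.Basis.equiv_apply, Equiv.refl_apply]
    rw [hbk, hbk, key2 t e f hef, Matrix.toBilin'_apply', Pi.basisFun_apply, Pi.basisFun_apply,
      Matrix.mulVec_single, single_dotProduct, one_mul, MulOpposite.op_one, one_smul, Matrix.col_apply]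
  calc u ⬝ᵥ (sK F ν) *ᵥ v = Matrix.toBilin' (sK F ν) u v := (Matrix.toBilin'_apply' _ _ _).symm
    _ = omg t (psi e f u) (psi e f v) := by rw [main]; rfl

lemma cross_ne_zero (t : E →ₗ[F] F) (htne : ∀ c : E, c ≠ 0 → ∃ b, t (c * b) ≠ 0)
    {o o' : Option E} (hoo : o ≠ o') {v : E × E} (hv : v ∈ LinearMap.range (lineO F o))
    (hv0 : v ≠ 0) : ∃ b, omg t v (lineO F o' b) ≠ 0 := by
  obtain ⟨a, rfl⟩ := hv
  have ha : a ≠ 0 := by rintro rfl; exact hv0 (map_zero _)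
  rcases o with _ | m <;> rcases o' with _ | m'
  · exact absurd rfl hoo
  · obtain ⟨b, hb⟩ := htne (-a) (neg_ne_zero.mpr ha)
    refine ⟨b, ?_⟩
    show t ((0 : E) * (m' * b) - a * b) ≠ 0
    rw [show (0 : E) * (m' * b) - a * b = -a * b by ring]
    exact hb
  · obtain ⟨b, hb⟩ := htne a ha
    refine ⟨b, ?_⟩
    show t (a * b - m * a * 0) ≠ 0
    rw [show a * b - m * a * 0 = a * b by ring]
    exact hb
  · have hm : m ≠ m' := by rintro rfl; exact hoo rfl
    obtain ⟨b, hb⟩ := htne ((m' - m) * a) (mul_ne_zero (sub_ne_zero.mpr (Ne.symm hm)) ha)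
    refine ⟨b, ?_⟩
    show t (a * (m' * b) - m * a * b) ≠ 0
    rw [show a * (m' * b) - m * a * b = (m' - m) * a * b by ring]
    exact hb

lemma card_level {F : Type} [Field F] [Fintype F] {E : Type} [AddCommGroup E] [Module F E]
    [FiniteDimensional F E] (l : E →ₗ[F] F) (hl : l ≠ 0) :
    Nat.card {a : E // l a = 1} = Fintype.card F ^ (Module.finrank F E - 1) := by
  obtain ⟨b, hb⟩ : ∃ b, l b ≠ 0 := by
    by_contra h
    push_neg at h
    exact hl (LinearMap.ext h)
  set a0 : E := (l b)⁻¹ • b with ha0def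
  have ha0 : l a0 = 1 := by
    rw [ha0def, _root_.map_smul, smul_eq_mul, inv_mul_cancel₀ hb]
  have equivK : {a : E // l a = 1} ≃ LinearMap.ker l :=
    { toFun := fun a => ⟨a.1 - a0, by simp [LinearMap.mem_ker, a.2, ha0]⟩
      invFun := fun k => ⟨k.1 + a0, by
        have := LinearMap.mem_ker.mp k.2
        simp [this, ha0]⟩
      left_inv := fun a => by ext; simp
      right_inv := fun k => by ext; simp }
  rw [Nat.card_congr equivK]
  have hrange : LinearMap.range l = ⊤ :=
    LinearMap.range_eq_top.mpr (fun c => ⟨c • a0, by rw [_root_.map_smul, ha0, smul_eq_mul, mul_one]⟩)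
  have h1 := LinearMap.finrank_range_add_finrank_ker l
  rw [hrange, finrank_top, Module.finrank_self] at h1
  have hker : Module.finrank F (LinearMap.ker l) = Module.finrank F E - 1 := by omega
  haveI : Finite E := Module.finite_of_finite F
  haveI : Fintype (LinearMap.ker l) := Fintype.ofFinite _
  rw [Nat.card_eq_fintype_card, Module.card_eq_pow_finrank (K := F) (V := LinearMap.ker l), hker]

end SpGAux

theorem SpG_partite (q ν : ℕ) (F : Type) [Field F] [Fintype F]
    (hF : Fintype.card F = q) (hν : 1 ≤ ν) :
    ∃ X : Fin (q ^ ν + 1) → Set (Projectivization F (Fin (2 * ν) → F)),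
      (⋃ i, X i) = Set.univ ∧
      (∀ i j, i ≠ j → Disjoint (X i) (X j)) ∧
      (∀ i, ∀ x ∈ X i, ∀ y ∈ X i, ¬ (SpG F ν).Adj x y) ∧
      (∀ i j, i ≠ j → ∀ x ∈ X i,
        {y | y ∈ X j ∧ (SpG F ν).Adj x y}.ncard = q ^ (ν - 1)) := by
  classical
  subst hF
  obtain ⟨E, _inst1, _inst2, hE⟩ := SpGAux.exists_ext F ν hν
  haveI : FiniteDimensional F E := FiniteDimensional.of_finrank_pos (by rw [hE]; omega)
  haveI : Finite E := Module.finite_of_finite F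
  haveI : Fintype E := Fintype.ofFinite E
  -- a basis and a nonzero functional
  let e : Module.Basis (Fin ν) F E := (Module.finBasis F E).reindex (finCongr hE)
  let i0 : Fin ν := ⟨0, hν⟩
  let t : E →ₗ[F] F := e.coord i0
  have ht0 : t (e i0) = 1 := by simp [t, Module.Basis.coord_apply, Module.Basis.repr_self]
  have htne : ∀ c : E, c ≠ 0 → ∃ b, t (c * b) ≠ 0 := by
    intro c hc
    refine ⟨c⁻¹ * e i0, ?_⟩
    rw [← mul_assoc, mul_inv_cancel₀ hc, one_mul, ht0]
    exact one_ne_zero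
  -- the trace bilinear form and its dual basis
  let B : LinearMap.BilinForm F E := (LinearMap.mul F E).compr₂ t
  have hB : B.Nondegenerate := by
    refine ⟨fun x hx => ?_, fun x hx => ?_⟩ <;>
    by_contra hx0 <;> obtain ⟨b, hb⟩ := htne x hx0
    · exact hb (hx b)
    · exact hb (by rw [mul_comm]; exact hx b)
  let f : Module.Basis (Fin ν) F E := B.dualBasis hB e
  have hef : ∀ i j, t (e i * f j) = if i = j then (1 : F) else 0 := by
    intro i j
    have h := LinearMap.BilinForm.apply_dualBasis_left (B := B) hB e j i
    rw [show B (f j) (e i) = t (f j * e i) from rfl, mul_comm] at h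
    exact h
  have hkey := SpGAux.key t e f hef
  -- the index equivalence
  have hcardE : Fintype.card E = Fintype.card F ^ ν := by
    rw [Module.card_eq_pow_finrank (K := F) (V := E), hE]
  let κ : Fin (Fintype.card F ^ ν + 1) ≃ Option E :=
    Fintype.equivOfCardEq (by simp [hcardE])
  -- nonzero representatives
  have hrep : ∀ x : Projectivization F (Fin (2 * ν) → F), SpGAux.psi e f x.rep ≠ 0 := by
    intro x h0
    exact x.rep_nonzero ((SpGAux.psi e f).map_eq_zero_iff.mp h0)
  -- adjacency characterization
  have adj_iff : ∀ x y : Projectivization F (Fin (2 * ν) → F),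
      (SpG F ν).Adj x y ↔ x ≠ y ∧ SpGAux.omg t (SpGAux.psi e f x.rep) (SpGAux.psi e f y.rep) ≠ 0 := by
    intro x y
    simp only [SpG, SimpleGraph.fromRel_adj]
    have h1 : (x.rep ⬝ᵥ (sK F ν) *ᵥ y.rep ≠ 0) ↔
        SpGAux.omg t (SpGAux.psi e f x.rep) (SpGAux.psi e f y.rep) ≠ 0 := by rw [hkey]
    have h2 : (y.rep ⬝ᵥ (sK F ν) *ᵥ x.rep ≠ 0) ↔
        SpGAux.omg t (SpGAux.psi e f x.rep) (SpGAux.psi e f y.rep) ≠ 0 := by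
      rw [hkey, SpGAux.omg_skew t, neg_ne_zero]
    rw [h1, h2, or_self]
  set X : Fin (Fintype.card F ^ ν + 1) → Set (Projectivization F (Fin (2 * ν) → F)) :=
    fun i => {x | SpGAux.psi e f x.rep ∈ LinearMap.range (SpGAux.lineO F (κ i))} with hXdef
  refine ⟨X, ?_, ?_, ?_, ?_⟩
  · -- union is everything
    apply Set.eq_univ_of_forall
    intro x
    rw [Set.mem_iUnion]
    obtain ⟨o, ho⟩ := SpGAux.lineO_cover (F := F) (SpGAux.psi e f x.rep) (hrep x)
    refine ⟨κ.symm o, ?_⟩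
    show SpGAux.psi e f x.rep ∈ LinearMap.range (SpGAux.lineO F (κ (κ.symm o)))
    rw [Equiv.apply_symm_apply]
    exact ho
  · -- pairwise disjoint
    intro i j hij
    rw [Set.disjoint_left]
    intro x hxi hxj
    exact hrep x (SpGAux.lineO_disjoint (κ.injective.ne hij) hxi hxj)
  · -- independent within a part
    intro i x hx y hy hadj
    obtain ⟨a, ha⟩ := hx
    obtain ⟨b, hb⟩ := hy
    apply ((adj_iff x y).mp hadj).2
    rw [← ha, ← hb]
    exact SpGAux.omg_line_line t (κ i) a b
  · -- regularity between parts
    intro i j hij x hx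
    have hv : SpGAux.psi e f x.rep ∈ LinearMap.range (SpGAux.lineO F (κ i)) := hx
    have hv0 : SpGAux.psi e f x.rep ≠ 0 := hrep x
    have hκij : κ i ≠ κ j := κ.injective.ne hij
    set l : E →ₗ[F] F :=
      ((SpGAux.omg t) (SpGAux.psi e f x.rep)).comp (SpGAux.lineO F (κ j)) with hldef
    have hlapp : ∀ a : E, l a = SpGAux.omg t (SpGAux.psi e f x.rep) (SpGAux.lineO F (κ j) a) :=
      fun a => rfl
    have hl0 : l ≠ 0 := by
      obtain ⟨b, hb⟩ := SpGAux.cross_ne_zero t htne hκij hv hv0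
      intro h0
      apply hb
      rw [← hlapp b, h0]
      rfl
    have hT := SpGAux.card_level l hl0
    rw [hE] at hT
    -- each projective point of the `j`-th line adjacent to `x` has a unique representative
    -- `lineO (κ j) a` with `l a = 1`
    have hane : ∀ a : E, l a = 1 → (SpGAux.psi e f).symm (SpGAux.lineO F (κ j) a) ≠ 0 := by
      intro a ha h0
      have h1 : SpGAux.lineO F (κ j) a = 0 := by
        have h2 := ((SpGAux.psi e f).symm.map_eq_zero_iff).mp h0
        exact h2
      have h2 : a = 0 := SpGAux.lineO_inj (κ j) (by rw [h1, map_zero])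
      rw [h2, map_zero] at ha
      exact one_ne_zero ha.symm
    have adjx : ∀ y : Projectivization F (Fin (2 * ν) → F),
        SpGAux.psi e f y.rep ∈ LinearMap.range (SpGAux.lineO F (κ j)) →
        SpGAux.omg t (SpGAux.psi e f x.rep) (SpGAux.psi e f y.rep) ≠ 0 → (SpG F ν).Adj x y := by
      intro y hyj hyO
      rw [adj_iff]
      refine ⟨?_, hyO⟩
      rintro rfl
      exact hv0 (SpGAux.lineO_disjoint hκij hv hyj)
    have hgmem : ∀ (a : E) (ha : l a = 1),
        (Projectivization.mk F ((SpGAux.psi e f).symm (SpGAux.lineO F (κ j) a)) (hane a ha))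
          ∈ {y | y ∈ X j ∧ (SpG F ν).Adj x y} := by
      intro a ha
      obtain ⟨c, hc⟩ := Projectivization.exists_smul_eq_mk_rep F
        ((SpGAux.psi e f).symm (SpGAux.lineO F (κ j) a)) (hane a ha)
      set y := Projectivization.mk F ((SpGAux.psi e f).symm (SpGAux.lineO F (κ j) a))
        (hane a ha) with hydef
      have hyrep : SpGAux.psi e f y.rep = (c : F) • SpGAux.lineO F (κ j) a := by
        rw [← hc, Units.smul_def, _root_.map_smul, LinearEquiv.apply_symm_apply]
      have hymem : SpGAux.psi e f y.rep ∈ LinearMap.range (SpGAux.lineO F (κ j)) := by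
        rw [hyrep, ← _root_.map_smul]
        exact ⟨(c : F) • a, rfl⟩
      refine ⟨hymem, ?_⟩
      apply adjx y hymem
      rw [hyrep, _root_.map_smul, smul_eq_mul, ← hlapp a, ha, mul_one]
      exact c.ne_zero
    let g : {a : E // l a = 1} → {y // y ∈ {y | y ∈ X j ∧ (SpG F ν).Adj x y}} := fun a =>
      ⟨Projectivization.mk F ((SpGAux.psi e f).symm (SpGAux.lineO F (κ j) a.1)) (hane a.1 a.2),
        hgmem a.1 a.2⟩
    have ginj : Function.Injective g := by
      rintro ⟨a, ha⟩ ⟨a', ha'⟩ hgg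
      have h1 : Projectivization.mk F _ (hane a ha) = Projectivization.mk F _ (hane a' ha') :=
        Subtype.ext_iff.mp hgg
      rw [Projectivization.mk_eq_mk_iff] at h1
      obtain ⟨c, hc⟩ := h1
      have h2 : SpGAux.lineO F (κ j) a = SpGAux.lineO F (κ j) ((c : F) • a') := by
        have h3 := congrArg (SpGAux.psi e f) hc
        rw [Units.smul_def, _root_.map_smul, LinearEquiv.apply_symm_apply,
          LinearEquiv.apply_symm_apply, ← _root_.map_smul] at h3
        exact h3.symm
      have h3 : a = (c : F) • a' := SpGAux.lineO_inj (κ j) h2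
      have h4 : (1 : F) = (c : F) := by
        have h5 := congrArg l h3
        rw [ha, _root_.map_smul, smul_eq_mul, ha', mul_one] at h5
        exact h5
      apply Subtype.ext
      show a = a'
      rw [h3, ← h4, one_smul]
    have gsurj : Function.Surjective g := by
      rintro ⟨y, hyX, hyadj⟩
      obtain ⟨b, hb⟩ := hyX
      have hcne : l b ≠ 0 := by
        rw [hlapp, hb]
        exact ((adj_iff x y).mp hyadj).2
      refine ⟨⟨(l b)⁻¹ • b, by rw [_root_.map_smul, smul_eq_mul, inv_mul_cancel₀ hcne]⟩, ?_⟩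
      apply Subtype.ext
      show Projectivization.mk F _ _ = y
      have harg : (SpGAux.psi e f).symm (SpGAux.lineO F (κ j) ((l b)⁻¹ • b))
          = (l b)⁻¹ • y.rep := by
        rw [_root_.map_smul, hb, _root_.map_smul, LinearEquiv.symm_apply_apply]
      have hmk : Projectivization.mk F _ (hane _ (by
            rw [_root_.map_smul, smul_eq_mul, inv_mul_cancel₀ hcne]))
          = Projectivization.mk F y.rep y.rep_nonzero := by
        rw [Projectivization.mk_eq_mk_iff]
        exact ⟨(Units.mk0 (l b) hcne)⁻¹, by
          rw [Units.smul_def, Units.val_inv_eq_inv_val, Units.val_mk0, harg]⟩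
      rw [hmk, Projectivization.mk_rep]
    have hcardS : Nat.card {y // y ∈ {y | y ∈ X j ∧ (SpG F ν).Adj x y}}
        = Nat.card {a : E // l a = 1} :=
      (Nat.card_congr (Equiv.ofBijective g ⟨ginj, gsurj⟩)).symm
    rw [← Nat.card_coe_set_eq, hcardS, hT]
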